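/- Let n ≥ 3, f ≥ 1, f < n/2, and let N_A be the set of directed graphs on [n] (with self-loops) in which every vertex has in-degree at least n − f. Then for any G, H ∈ N_A there is a chain G = H₀, H₁, …, H_q = H of graphs in N_A with q ≤ ⌈n/f⌉ and graphs K₁, …, K_q ∈ N_A such that for each r, every vertex in the root set R(K_r) has identical in-neighborhoods in H_{r−1} and H_r. Concretely, taking In_i(H_r) = In_i(G) for i ≤ rf and In_i(H_r) = In_i(H) for i > rf, and In_i(K_r) = [n] \ {(r−1)f+1, …, rf}, these graphs lie in N_A and satisfy the conditions with R(K_r) ⊇ [n] \ {(r−1)f+1, …, rf}. -/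

import Mathlib

/-- A vertex `r` is a root of the graph given by in-neighborhoods `In`:
it has a directed path to every vertex (edge from `a` to `b` iff `a ∈ In b`). -/
def IsRoot {n : ℕ} (In : Fin n → Finset (Fin n)) (r : Fin n) : Prop :=
  ∀ v, Relation.ReflTransGen (fun a b => a ∈ In b) r v

theorem alpha_diameter_crash_model {n f : ℕ} (hn : 3 ≤ n) (hf : 1 ≤ f) (hfn : 2 * f < n)
    (G H : Fin n → Finset (Fin n))
    (hGself : ∀ i, i ∈ G i) (hHself : ∀ i, i ∈ H i)
    (hGdeg : ∀ i, n - f ≤ (G i).card) (hHdeg : ∀ i, n - f ≤ (H i).card) :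
    ∃ q : ℕ, q ≤ ⌈(n : ℚ) / f⌉₊ ∧
      ∃ Hs : Fin (q + 1) → (Fin n → Finset (Fin n)),
      ∃ Ks : Fin q → (Fin n → Finset (Fin n)),
        Hs 0 = G ∧ Hs (Fin.last q) = H ∧
        (∀ r i, i ∈ Hs r i ∧ n - f ≤ (Hs r i).card) ∧
        (∀ r i, i ∈ Ks r i ∧ n - f ≤ (Ks r i).card) ∧
        (∀ r : Fin q, ∀ i : Fin n, IsRoot (Ks r) i → Hs r.castSucc i = Hs r.succ i) := by
  set q : ℕ := ⌈(n : ℚ) / f⌉₊ with hq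
  have hf0 : (0 : ℚ) < (f : ℚ) := by exact_mod_cast hf
  have hnqf : n ≤ q * f := by
    have h1 : (n : ℚ) / f ≤ (q : ℚ) := Nat.le_ceil _
    have h2 : (n : ℚ) ≤ (q : ℚ) * f := by
      rw [div_le_iff₀ hf0] at h1; exact h1
    exact_mod_cast h2
  -- the "band" of vertices removed in step r
  have bandcard : ∀ r : ℕ,
      (Finset.univ.filter (fun j : Fin n => r * f ≤ j.val ∧ j.val < (r + 1) * f)).card ≤ f := by
    intro r
    have : (Finset.univ.filter (fun j : Fin n => r * f ≤ j.val ∧ j.val < (r + 1) * f)).card ≤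
        (Finset.range f).card := by
      apply Finset.card_le_card_of_injOn (fun j => j.val - r * f)
      · intro j hj
        simp only [Finset.mem_coe, Finset.mem_filter] at hj
        simp only [Finset.mem_coe, Finset.mem_range]
        have h1 := hj.2.1
        have h2 := hj.2.2
        have h3 : (r + 1) * f = r * f + f := Nat.succ_mul r f
        omega
      · intro a ha b hb hab
        simp only [Finset.mem_coe, Finset.mem_filter] at ha hb
        have h3 : (r + 1) * f = r * f + f := Nat.succ_mul r f
        have hab' : a.val - r * f = b.val - r * f := hab
        have : a.val = b.val := by omega
        exact Fin.ext this
    simpa using this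
  refine ⟨q, le_refl _,
    (fun r i => if i.val < r.val * f then H i else G i),
    (fun r i => insert i (Finset.univ.filter
      (fun j : Fin n => j.val < r.val * f ∨ (r.val + 1) * f ≤ j.val))), ?_, ?_, ?_, ?_, ?_⟩
  · funext i; simp
  · funext i
    have : i.val < q * f := lt_of_lt_of_le i.isLt hnqf
    simp [Fin.last, this]
  · intro r i
    constructor
    · by_cases h : i.val < r.val * f <;> simp [h, hGself i, hHself i]
    · by_cases h : i.val < r.val * f <;> simp [h, hGdeg i, hHdeg i]
  · intro r i
    refine ⟨Finset.mem_insert_self _ _, ?_⟩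
    have hsub : (Finset.univ.filter
        (fun j : Fin n => j.val < r.val * f ∨ (r.val + 1) * f ≤ j.val)) ⊆
        insert i (Finset.univ.filter
        (fun j : Fin n => j.val < r.val * f ∨ (r.val + 1) * f ≤ j.val)) :=
      Finset.subset_insert _ _
    refine le_trans ?_ (Finset.card_le_card hsub)
    have hsplit := Finset.card_filter_add_card_filter_not
      (s := (Finset.univ : Finset (Fin n)))
      (p := fun j : Fin n => j.val < r.val * f ∨ (r.val + 1) * f ≤ j.val)
    have hneg : (Finset.univ.filter
        (fun j : Fin n => ¬(j.val < r.val * f ∨ (r.val + 1) * f ≤ j.val))).card ≤ f := by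
      have : (Finset.univ.filter
          (fun j : Fin n => ¬(j.val < r.val * f ∨ (r.val + 1) * f ≤ j.val))) =
          (Finset.univ.filter
          (fun j : Fin n => r.val * f ≤ j.val ∧ j.val < (r.val + 1) * f)) := by
        apply Finset.filter_congr; intro j _; constructor <;> intro h <;> omega
      rw [this]; exact bandcard r.val
    simp only [Finset.card_univ, Fintype.card_fin] at hsplit
    omega
  · intro r i hroot
    by_cases hP : i.val < r.val * f ∨ (r.val + 1) * f ≤ i.val
    · have hrc : (r.castSucc : Fin (q+1)).val = r.val := rfl
      have hrs : (r.succ : Fin (q+1)).val = r.val + 1 := rfl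
      rcases hP with h | h
      · have h1 : i.val < r.val * f := h
        have h2 : i.val < (r.val + 1) * f := lt_of_lt_of_le h (by nlinarith)
        simp [hrc, hrs, h1, h2]
      · have h1 : ¬ i.val < r.val * f := by nlinarith
        have h2 : ¬ i.val < (r.val + 1) * f := by omega
        simp [hrc, hrs, h1, h2]
    · -- i is in the band, so i is not a root: contradiction
      exfalso
      have hreach : ∀ v, Relation.ReflTransGen
          (fun a b => a ∈ insert b (Finset.univ.filter
            (fun j : Fin n => j.val < r.val * f ∨ (r.val + 1) * f ≤ j.val))) i v → v = i := by
        intro v hv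
        induction hv with
        | refl => rfl
        | tail hbc hedge ih =>
          subst ih
          rcases Finset.mem_insert.mp hedge with h | h
          · exact h.symm
          · simp only [Finset.mem_filter] at h
            exact absurd h.2 hP
      obtain ⟨v, hv⟩ := Fintype.exists_ne_of_one_lt_card
        (by simp; omega : 1 < Fintype.card (Fin n)) i
      exact hv (hreach v (hroot v))
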